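/- If S = S(Z) is a balancing score (i.e., T ⊥ Z | S), then the propensity score p(Z) = E[T | Z] is almost surely a measurable function of S. -/

import Mathlib

open MeasureTheory

/-- Doob–Dynkin factorization for real-valued functions. -/
lemma doob_dynkin_real {Ω : Type*} (S : Ω → ℝ) (φ : Ω → ℝ)
    (hφ : Measurable[MeasurableSpace.comap S (inferInstance : MeasurableSpace ℝ)] φ) :
    ∃ g : ℝ → ℝ, Measurable g ∧ ∀ ω, g (S ω) = φ ω := by
  classical
  have h : ∀ q : ℚ, ∃ B : Set ℝ, MeasurableSet B ∧ S ⁻¹' B = φ ⁻¹' (Set.Iio (q : ℝ)) :=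
    fun q => hφ measurableSet_Iio
  choose B hBmeas hBpre using h
  set G : ℝ → EReal := fun y => ⨅ q : ℚ, if y ∈ B q then ((q : ℝ) : EReal) else ⊤ with hG
  have hGmeas : Measurable G := by
    refine Measurable.iInf fun q => Measurable.ite (hBmeas q) measurable_const measurable_const
  have hmem : ∀ (q : ℚ) (ω : Ω), S ω ∈ B q ↔ φ ω < (q : ℝ) := by
    intro q ω
    have := Set.ext_iff.mp (hBpre q) ω
    simpa using this
  have key : ∀ ω, G (S ω) = ((φ ω : ℝ) : EReal) := by
    intro ω
    refine le_antisymm ?_ ?_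
    · by_contra hlt
      push_neg at hlt
      obtain ⟨q, hq1, hq2⟩ := EReal.exists_rat_btwn_of_lt hlt
      have hqmem : S ω ∈ B q := (hmem q ω).mpr (by exact_mod_cast hq1)
      have : G (S ω) ≤ ((q : ℝ) : EReal) := by
        refine iInf_le_of_le q ?_
        simp [hqmem]
      exact absurd (this.trans_lt hq2) (lt_irrefl _)
    · refine le_iInf fun q => ?_
      split_ifs with hq
      · exact_mod_cast le_of_lt ((hmem q ω).mp hq)
      · exact le_top
  exact ⟨fun y => (G y).toReal, measurable_ereal_toReal.comp hGmeas, fun ω => by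
    simp only [key ω, EReal.toReal_coe]⟩

set_option maxHeartbeats 1000000 in
/-- If `S = S(Z)` is a balancing score (`T ⊥ Z ∣ S`), then the propensity score
`p(Z) = E[T ∣ Z]` is almost surely a measurable function of `S`. -/
theorem balancing_score_propensity_function
    {Ω : Type*} [MeasurableSpace Ω] (μ : Measure Ω) [IsProbabilityMeasure μ]
    {M : ℕ} (Z : Ω → (Fin M → ℝ)) (hZ : Measurable Z)
    (T : Ω → ℝ) (hT : Measurable T) (hT01 : ∀ ω, T ω = 0 ∨ T ω = 1)
    (S : Ω → ℝ) (S0 : (Fin M → ℝ) → ℝ) (hS0 : Measurable S0)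
    (hSZ : S = fun ω => S0 (Z ω))
    (mS : MeasurableSpace Ω) (hmS : mS = MeasurableSpace.comap S inferInstance)
    (hbal : ∀ f : (Fin M → ℝ) → ℝ, Measurable f → (∃ C, ∀ x, |f x| ≤ C) →
      μ[fun ω => T ω * f (Z ω) | mS]
        =ᵐ[μ] fun ω => (μ[T | mS]) ω * (μ[fun ω => f (Z ω) | mS]) ω) :
    ∃ g : ℝ → ℝ, Measurable g ∧
      μ[T | MeasurableSpace.comap Z inferInstance] =ᵐ[μ] fun ω => g (S ω) := by
  rename_i m0 hprob
  set mZ := MeasurableSpace.comap Z (inferInstance : MeasurableSpace (Fin M → ℝ)) with hmZdef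
  letI : MeasurableSpace Ω := m0
  have hmZ : mZ ≤ m0 := hZ.comap_le
  have hS : Measurable[m0] S := by rw [hSZ]; exact hS0.comp hZ
  have hmSle : mS ≤ m0 := hmS ▸ hS.comap_le
  have hmSmZ : mS ≤ mZ := by
    rw [hmS, hSZ, hmZdef]
    have : (fun ω => S0 (Z ω)) = S0 ∘ Z := rfl
    rw [this, ← MeasurableSpace.comap_comp]
    exact MeasurableSpace.comap_mono hS0.comap_le
  have hTbd : ∀ ω, |T ω| ≤ 1 := by
    intro ω; rcases hT01 ω with h | h <;> simp [h]
  have hTint : Integrable T μ :=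
    (integrable_const (1 : ℝ)).mono' hT.aestronglyMeasurable (Filter.Eventually.of_forall hTbd)
  set g := μ[T | mS] with hgdef
  have hgsm : StronglyMeasurable[mS] g := stronglyMeasurable_condExp
  have hgint : Integrable g μ := integrable_condExp
  have key : g =ᵐ[μ] μ[T | mZ] := by
    refine ae_eq_condExp_of_forall_setIntegral_eq hmZ hTint
      (fun s _ _ => hgint.integrableOn) (fun s hs _ => ?_)
      ((hgsm.mono hmSmZ).aestronglyMeasurable)
    obtain ⟨Bs, hBs, rfl⟩ := hs
    set f : (Fin M → ℝ) → ℝ := Bs.indicator (fun _ => (1 : ℝ)) with hfdef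
    have hf : Measurable f := measurable_const.indicator hBs
    have hfb : ∀ x, |f x| ≤ 1 := by
      intro x; rw [hfdef]; by_cases hx : x ∈ Bs <;> simp [Set.indicator, hx]
    have hsM : MeasurableSet[m0] (Z ⁻¹' Bs) := hZ hBs
    have hind : ∀ (u : Ω → ℝ), (Z ⁻¹' Bs).indicator u = fun ω => u ω * f (Z ω) := by
      intro u; funext ω
      by_cases hω : Z ω ∈ Bs <;>
        simp [Set.indicator, hfdef, Set.mem_preimage, hω]
    have hstep : ∀ u : Ω → ℝ, ∫ x in Z ⁻¹' Bs, u x ∂μ = ∫ x, u x * f (Z x) ∂μ := by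
      intro u
      rw [← integral_indicator hsM]
      exact integral_congr_ae (Filter.EventuallyEq.of_eq (hind u))
    -- integrability facts
    have hfZint : Integrable (fun ω => f (Z ω)) μ :=
      (integrable_const (1 : ℝ)).mono' (hf.comp hZ).aestronglyMeasurable
        (Filter.Eventually.of_forall fun ω => hfb (Z ω))
    have hgfZint : Integrable (fun ω => g ω * f (Z ω)) μ := by
      refine hgint.abs.mono' ((hgsm.mono hmSle).aestronglyMeasurable.mul
        (hf.comp hZ).aestronglyMeasurable) (Filter.Eventually.of_forall fun ω => ?_)
      rw [Real.norm_eq_abs, abs_mul]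
      exact mul_le_of_le_one_right (abs_nonneg _) (hfb (Z ω))
    have hTfZint : Integrable (fun ω => T ω * f (Z ω)) μ := by
      refine hTint.abs.mono' (hT.aestronglyMeasurable.mul
        (hf.comp hZ).aestronglyMeasurable) (Filter.Eventually.of_forall fun ω => ?_)
      rw [Real.norm_eq_abs, abs_mul]
      exact mul_le_of_le_one_right (abs_nonneg _) (hfb (Z ω))
    -- pull-out property for g
    have hmul : μ[(fun ω => g ω * f (Z ω)) | mS]
        =ᵐ[μ] fun ω => g ω * (μ[(fun ω => f (Z ω)) | mS]) ω := by
      have := condExp_mul_of_stronglyMeasurable_left (μ := μ) hgsm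
        (by exact hgfZint) hfZint
      exact this
    -- balancing property
    have hbalf := hbal f hf ⟨1, hfb⟩
    -- LHS
    calc ∫ x in Z ⁻¹' Bs, g x ∂μ
        = ∫ x, g x * f (Z x) ∂μ := hstep g
      _ = ∫ x, (μ[(fun ω => g ω * f (Z ω)) | mS]) x ∂μ := (integral_condExp hmSle).symm
      _ = ∫ x, g x * (μ[(fun ω => f (Z ω)) | mS]) x ∂μ := integral_congr_ae hmul
      _ = ∫ x, (μ[(fun ω => T ω * f (Z ω)) | mS]) x ∂μ := (integral_congr_ae hbalf).symm
      _ = ∫ x, T x * f (Z x) ∂μ := integral_condExp hmSle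
      _ = ∫ x in Z ⁻¹' Bs, T x ∂μ := (hstep T).symm
  -- factorization
  have hgm' : Measurable[MeasurableSpace.comap S (inferInstance : MeasurableSpace ℝ)] g := by
    rw [← hmS]; exact hgsm.measurable
  obtain ⟨g0, hg0, hfac⟩ := doob_dynkin_real S g hgm'
  refine ⟨g0, hg0, ?_⟩
  refine key.symm.trans ?_
  exact Filter.EventuallyEq.of_eq (funext fun ω => (hfac ω).symm)
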